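/- Let p be a prime with p ≡ 1 (mod 4), t, b positive integers with t² + 4 = b²p and p ∤ b, and A, B integers with p = A² + B², A odd, and p ∣ At + 2B. Then there exist integers x₀ and y₀ such that 2p·x₀² = bp + (At + 2B), 2p·y₀² = bp − (At + 2B), and 2p·x₀·y₀ = Bt − 2A. -/

import Mathlib

theorem stmt_12 (p : ℕ) (hp : p.Prime) (hp4 : p % 4 = 1)
    (t b : ℤ) (ht : 0 < t) (hb : 0 < b)
    (hpt : t ^ 2 + 4 = b ^ 2 * (p : ℤ)) (hpb : ¬(p : ℤ) ∣ b)
    (A B : ℤ) (hAB : (p : ℤ) = A ^ 2 + B ^ 2) (hA : Odd A)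
    (hdvd : (p : ℤ) ∣ A * t + 2 * B) :
    ∃ x₀ y₀ : ℤ, 2 * (p : ℤ) * x₀ ^ 2 = b * p + (A * t + 2 * B) ∧
      2 * (p : ℤ) * y₀ ^ 2 = b * p - (A * t + 2 * B) ∧
      2 * (p : ℤ) * x₀ * y₀ = B * t - 2 * A := by
  have hpZ : Prime (p : ℤ) := Nat.prime_iff_prime_int.mp hp
  have hppos : (0 : ℤ) < (p : ℤ) := by exact_mod_cast hp.pos
  have hpodd : Odd (p : ℤ) := by
    have : p % 2 = 1 := by omega
    exact_mod_cast Nat.odd_iff.mpr this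
  -- p does not divide A
  have hpA : ¬ (p : ℤ) ∣ A := by
    intro h
    have hA0 : A ≠ 0 := by rintro rfl; exact (by simp : ¬ Odd (0:ℤ)) hA
    have h1 : (p:ℤ) ≤ |A| := Int.le_of_dvd (abs_pos.mpr hA0) ((dvd_abs _ _).mpr h)
    have h2 : (p:ℤ)^2 ≤ A^2 := by
      have := sq_abs A
      nlinarith
    nlinarith [sq_nonneg B, hp.one_lt, (by exact_mod_cast hp.one_lt : (1:ℤ) < p)]
  -- p divides B*t - 2*A
  have hdvd2 : (p : ℤ) ∣ B * t - 2 * A := by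
    have key : A * (B * t - 2 * A) = B * (A * t + 2 * B) - 2 * (A^2 + B^2) := by ring
    have h1 : (p:ℤ) ∣ A * (B * t - 2 * A) := by
      rw [key, ← hAB]
      exact dvd_sub (Dvd.dvd.mul_left hdvd B) (Dvd.dvd.mul_left dvd_rfl 2)
    exact (hpZ.dvd_or_dvd h1).resolve_left hpA
  obtain ⟨u, hu⟩ := hdvd
  obtain ⟨v, hv⟩ := hdvd2
  have hpne : (p:ℤ) ≠ 0 := ne_of_gt hppos
  -- u^2 + v^2 = b^2
  have huv : u^2 + v^2 = b^2 := by
    have key : (p:ℤ)^2 * (u^2 + v^2) = (p:ℤ)^2 * b^2 := by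
      have e1 : ((p:ℤ)*u)^2 + ((p:ℤ)*v)^2 = (A^2 + B^2) * (t^2 + 4) := by
        rw [← hu, ← hv]; ring
      rw [← hAB, hpt] at e1
      nlinarith [e1]
    exact mul_left_cancel₀ (pow_ne_zero 2 hpne) key
  -- Bezout-ish identities
  have hAu : A * u + B * v = t := by
    have : (p:ℤ) * (A * u + B * v) = (p:ℤ) * t := by
      have : A * ((p:ℤ)*u) + B * ((p:ℤ)*v) = (A^2+B^2) * t := by rw [← hu, ← hv]; ring
      rw [← hAB] at this; linarith [this]
    exact mul_left_cancel₀ hpne this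
  have hBu : B * u - A * v = 2 := by
    have : (p:ℤ) * (B * u - A * v) = (p:ℤ) * 2 := by
      have : B * ((p:ℤ)*u) - A * ((p:ℤ)*v) = 2 * (A^2+B^2) := by rw [← hu, ← hv]; ring
      rw [← hAB] at this; linarith [this]
    exact mul_left_cancel₀ hpne this
  have hBeven : Even B := by
    rcases Int.even_or_odd B with h | h
    · exact h
    · exfalso
      have : Even ((p:ℤ)) := by
        rw [hAB]
        exact (hA.pow).add_odd (h.pow)
      exact (Int.not_odd_iff_even.mpr this) hpodd
  rcases Int.even_or_odd t with ⟨s, hs⟩ | hodd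
  · -- t even case
    have hs' : t = 2 * s := by omega
    -- b is even
    have hbeven : Even b := by
      rcases Int.even_or_odd b with h | h
      · exact h
      · exfalso
        have h1 : Even (b^2 * (p:ℤ)) := by
          rw [← hpt, hs']; exact ⟨2*s^2 + 2, by ring⟩
        have h2 : Odd (b ^ 2 * (p:ℤ)) := (h.pow (n := 2)).mul hpodd
        exact (Int.not_odd_iff_even.mpr h1) h2
    obtain ⟨c, hc⟩ := hbeven
    have hc' : b = 2 * c := by omega
    have hcpos : 0 < c := by omega
    have hsc : s^2 + 1 = c^2 * (p:ℤ) := by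
      have : (2*s)^2 + 4 = (2*c)^2 * (p:ℤ) := by rw [← hs', ← hc']; exact hpt
      nlinarith [this]
    -- s is even
    have hseven : Even s := by
      rcases Int.even_or_odd s with h | h
      · exact h
      · exfalso
        obtain ⟨k, hk⟩ := h
        have hceven : Even c := by
          rcases Int.even_or_odd c with h2 | h2
          · exact h2
          · exfalso
            have : Odd (c^2 * (p:ℤ)) := (h2.pow).mul hpodd
            rw [← hsc, hk] at this
            obtain ⟨j, hj⟩ := this
            have hK : k^2 = k^2 := rfl
            set K := k^2 with hKdef
            have : (2*k+1)^2 + 1 = 4*K + 4*k + 2 := by rw [hKdef]; ring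
            omega
        obtain ⟨d, hd⟩ := hceven
        have : s^2 + 1 = (2*d)^2 * (p:ℤ) := by rw [← (by omega : c = 2*d)]; exact hsc
        rw [hk] at this
        set K := k^2 with hKdef
        set M := d^2 * (p:ℤ) with hMdef
        have h5 : 4*K + 4*k + 2 = 4*M := by
          have e : (2*k+1)^2 + 1 = 4*K + 4*k + 2 := by rw [hKdef]; ring
          have e2 : (2*d)^2 * (p:ℤ) = 4*M := by rw [hMdef]; ring
          omega
        omega
    obtain ⟨s', hss⟩ := hseven
    have hss' : s = 2 * s' := by omega
    -- u and v are even
    have hueven : Even u := by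
      have h1 : (p:ℤ) * u = 2 * (A * s + B) := by rw [← hu, hs']; ring
      have h2 : Even ((p:ℤ) * u) := ⟨A*s+B, by linarith⟩
      rcases Int.even_or_odd u with h | h
      · exact h
      · exact absurd (hpodd.mul h) (Int.not_odd_iff_even.mpr h2)
    have hveven : Even v := by
      have h1 : (p:ℤ) * v = 2 * (B * s - A) := by rw [← hv, hs']; ring
      have h2 : Even ((p:ℤ) * v) := ⟨B*s-A, by linarith⟩
      rcases Int.even_or_odd v with h | h
      · exact h
      · exact absurd (hpodd.mul h) (Int.not_odd_iff_even.mpr h2)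
    obtain ⟨u', hu'⟩ := hueven
    obtain ⟨v', hv'⟩ := hveven
    have hu2 : u = 2 * u' := by omega
    have hv2 : v = 2 * v' := by omega
    -- Bezout for u', v'
    have hBez : B * u' - A * v' = 1 := by
      have := hBu
      rw [hu2, hv2] at this
      linarith
    have hcop : Int.gcd v' u' = 1 := by
      rw [← Int.isCoprime_iff_gcd_eq_one]
      exact ⟨-A, B, by linarith⟩
    -- v' is odd
    have hv'odd : v' % 2 = 1 := by
      have h1 : (p:ℤ) * v = 2 * (B * s - A) := by rw [← hv, hs']; ring
      have h2 : (p:ℤ) * v' = B * s - A := by rw [hv2] at h1; linarith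
      have h3 : Odd (B * s - A) := by
        obtain ⟨B', hB'⟩ := hBeven
        obtain ⟨a', ha'⟩ := hA
        exact ⟨B' * s - a' - 1, by rw [hB', ha']; ring⟩
      rw [← h2] at h3
      rcases Int.even_or_odd v' with h | h
      · exact absurd ((h.mul_left _)) (Int.not_even_iff_odd.mpr h3)
      · exact Int.odd_iff.mp h
    -- Pythagorean triple (v', u', c)
    have htriple : PythagoreanTriple v' u' c := by
      have h0 : u^2 + v^2 = b^2 := huv
      rw [hu2, hv2, hc'] at h0
      have h5 : 4*(v'^2+u'^2) = 4*(c^2) := by linear_combination h0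
      have h6 : v'^2+u'^2 = c^2 := by linarith
      unfold PythagoreanTriple
      linear_combination h6
    obtain ⟨m, n, hx, hy, hz, -, -, -⟩ :=
      htriple.coprime_classification' hcop hv'odd hcpos
    refine ⟨m + n, m - n, ?_, ?_, ?_⟩
    · rw [hu, hu2, hy, hc']; rw [hz]; ring
    · rw [hu, hu2, hy, hc']; rw [hz]; ring
    · rw [hv, hv2, hx]; ring
  · -- t odd case
    -- u is odd
    have huodd : u % 2 = 1 := by
      have h3 : Odd (A * t + 2 * B) := by
        obtain ⟨a', ha'⟩ := hA
        obtain ⟨t', ht'⟩ := hodd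
        exact ⟨2*a'*t' + a' + t' + B, by rw [ha', ht']; ring⟩
      rw [hu] at h3
      rcases Int.even_or_odd u with h | h
      · exact absurd (h.mul_left _) (Int.not_even_iff_odd.mpr h3)
      · exact Int.odd_iff.mp h
    -- coprime u v
    have hcop : Int.gcd u v = 1 := by
      rw [← Int.isCoprime_iff_gcd_eq_one]
      obtain ⟨t', ht'⟩ := hodd
      -- 1 = t - 2*t' = (A*u + B*v) - t'*(B*u - A*v)
      exact ⟨A - t' * B, B + t' * A, by linear_combination hAu - t' * hBu + ht'⟩
    have htriple : PythagoreanTriple u v b := by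
      unfold PythagoreanTriple
      linear_combination huv
    obtain ⟨m, n, hx, hy, hz, -, -, -⟩ :=
      htriple.coprime_classification' hcop huodd hb
    refine ⟨m, n, ?_, ?_, ?_⟩
    · rw [hu, hx, hz]; ring
    · rw [hu, hx, hz]; ring
    · rw [hv, hy]; ring
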